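/- With c_0 = (1 + (sqrt(2) - 1)*i)/4, c_1 = (1 - (sqrt(2) + 1)*i)/4, c_2 = ((1 + sqrt(2)) + i)/4, c_3 = ((1 - sqrt(2)) + i)/4 and p_3(s) = c_0*s_0 + c_1*s_1 + c_2*s_2 + c_3*s_0*s_1*s_2, for every s = (s_0, s_1, s_2) in {-1,1}^3 one has |p_3(s)| = 1; equivalently, (Re p_3(s))^2 + (Im p_3(s))^2 = 1. -/

import Mathlib

noncomputable def p3 (s : Fin 3 → ℝ) : ℂ :=
  ((1 + (Real.sqrt 2 - 1) * Complex.I) / 4) * (s 0)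
    + ((1 - (Real.sqrt 2 + 1) * Complex.I) / 4) * (s 1)
    + (((1 + Real.sqrt 2) + Complex.I) / 4) * (s 2)
    + (((1 - Real.sqrt 2) + Complex.I) / 4) * ((s 0) * (s 1) * (s 2))

/-- The `n = 3` phase encoding polynomial has unit modulus on the sign cube:
`|p₃(s)| = 1`, equivalently `(Re p₃(s))² + (Im p₃(s))² = 1`. -/
theorem p3_unit_modulus (s : Fin 3 → ℝ) (hs : ∀ i, s i = 1 ∨ s i = -1) :
    ‖p3 s‖ = 1 ∧ (p3 s).re ^ 2 + (p3 s).im ^ 2 = 1 := by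
  have hr : Real.sqrt 2 ^ 2 = 2 := Real.sq_sqrt (by norm_num)
  have key : (p3 s).re ^ 2 + (p3 s).im ^ 2 = 1 := by
    rcases hs 0 with h0 | h0 <;> rcases hs 1 with h1 | h1 <;> rcases hs 2 with h2 | h2 <;>
      simp [p3, h0, h1, h2, Complex.add_re, Complex.add_im, Complex.div_re, Complex.div_im,
        Complex.normSq] <;> nlinarith [hr]
  refine ⟨?_, key⟩
  rw [Complex.norm_def, Complex.normSq_apply]
  rw [show (p3 s).re * (p3 s).re + (p3 s).im * (p3 s).im = 1 by nlinarith [key]]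
  exact Real.sqrt_one
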